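/- Let 𝔽 be ℝ or ℂ, X a Banach space over 𝔽, and 𝒜 a standard operator algebra in B(X). If A ∈ 𝒜 satisfies [A, P]₃ = 0 for every rank-one idempotent P ∈ 𝒜, then A = λI for some scalar λ ∈ 𝔽. -/

import Mathlib

set_option synthInstance.maxHeartbeats 400000
set_option maxHeartbeats 1000000

/-- The commutator `[A,B] = AB - BA` in a ring. -/
def bracket1 {R : Type*} [Ring R] (A B : R) : R := A * B - B * A

/-- The 3-commutator `[A,B]₃ = [[[A,B],B],B]` in a ring. -/
def bracket3 {R : Type*} [Ring R] (A B : R) : R := bracket1 (bracket1 (bracket1 A B) B) B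

/-- A standard operator algebra on a normed space `X` over `𝕜` is a subalgebra of
`B(X)` (automatically containing the identity) containing all finite-rank operators. -/
def IsStandardOperatorAlgebra (𝕜 : Type*) [RCLike 𝕜] (X : Type*)
    [NormedAddCommGroup X] [NormedSpace 𝕜 X]
    (𝒜 : Subalgebra 𝕜 (X →L[𝕜] X)) : Prop :=
  ∀ T : X →L[𝕜] X, FiniteDimensional 𝕜 (LinearMap.range (T : X →ₗ[𝕜] X)) → T ∈ 𝒜

lemma br3_idem {R : Type*} [Ring R] (A P : R) (hP : P * P = P) (h0 : bracket3 A P = 0) :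
    A * P = P * A := by
  have key : bracket3 A P
      = A*(P*P*P) - 3*(P*(A*(P*P))) + 3*((P*P)*(A*P)) - (P*P*P)*A := by
    unfold bracket3 bracket1; noncomm_ring
  simp only [hP] at key
  have h1 : A*P - 3*(P*(A*P)) + 3*(P*(A*P)) - P*A = 0 := by rw [← key]; exact h0
  have h2 : A*P - P*A = 0 := by
    calc A*P - P*A = A*P - 3*(P*(A*P)) + 3*(P*(A*P)) - P*A := by noncomm_ring
    _ = 0 := h1
  exact sub_eq_zero.mp h2

theorem stmt_4 {𝕜 X : Type*} [RCLike 𝕜] [NormedAddCommGroup X] [NormedSpace 𝕜 X]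
    [CompleteSpace X]
    (𝒜 : Subalgebra 𝕜 (X →L[𝕜] X)) (h𝒜 : IsStandardOperatorAlgebra 𝕜 X 𝒜)
    (A : 𝒜)
    (h : ∀ P : 𝒜, P * P = P →
      Module.rank 𝕜 (LinearMap.range ((P : X →L[𝕜] X) : X →ₗ[𝕜] X)) = 1 →
      bracket3 (A : 𝒜) P = 0) :
    ∃ l : 𝕜, A = l • (1 : 𝒜) := by
  -- every nonzero vector is an eigenvector
  have eig : ∀ x : X, x ≠ 0 → ∃ c : 𝕜, (A : X →L[𝕜] X) x = c • x := by
    intro x hx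
    obtain ⟨f, hf⟩ : ∃ f : X →L[𝕜] 𝕜, f x = 1 := SeparatingDual.exists_eq_one hx
    set P : X →L[𝕜] X := f.smulRight x with hPdef
    have hPapp : ∀ y, P y = f y • x := fun y => rfl
    have hPx : P x = x := by rw [hPapp, hf, one_smul]
    have hPidem : P * P = P := by
      ext y
      simp only [ContinuousLinearMap.mul_apply, hPapp, map_smul, hf, smul_eq_mul, mul_one,
        smul_smul]
    have hrange : LinearMap.range ((P : X →L[𝕜] X) : X →ₗ[𝕜] X) = Submodule.span 𝕜 {x} := by
      apply le_antisymm
      · rintro y ⟨z, rfl⟩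
        exact Submodule.smul_mem _ _ (Submodule.mem_span_singleton_self x)
      · rw [Submodule.span_singleton_le_iff_mem]
        exact ⟨x, hPx⟩
    have hrank : Module.rank 𝕜 (LinearMap.range ((P : X →L[𝕜] X) : X →ₗ[𝕜] X)) = 1 := by
      rw [hrange, rank_span_set (LinearIndepOn.singleton (v := id) hx), Cardinal.mk_singleton]
    have hfin : FiniteDimensional 𝕜 (LinearMap.range ((P : X →L[𝕜] X) : X →ₗ[𝕜] X)) := by
      rw [hrange]; infer_instance
    have hPmem : P ∈ 𝒜 := h𝒜 P hfin
    have hcomm : (A : 𝒜) * ⟨P, hPmem⟩ = ⟨P, hPmem⟩ * A := by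
      apply br3_idem
      · exact Subtype.ext hPidem
      · refine h ⟨P, hPmem⟩ (Subtype.ext hPidem) hrank
    have hcomm' : (A : X →L[𝕜] X) * P = P * (A : X →L[𝕜] X) := congrArg Subtype.val hcomm
    have := congrFun (congrArg DFunLike.coe hcomm') x
    simp only [ContinuousLinearMap.mul_apply, hPx, hPapp] at this
    exact ⟨f ((A : X →L[𝕜] X) x), this⟩
  by_cases hX : ∀ x : X, x = 0
  · refine ⟨0, ?_⟩
    ext y
    simp [hX y]
  · push_neg at hX
    obtain ⟨x₀, hx₀⟩ := hX
    obtain ⟨c, hc⟩ := eig x₀ hx₀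
    refine ⟨c, ?_⟩
    apply Subtype.ext
    ext y
    simp only [Subalgebra.coe_smul, ContinuousLinearMap.smul_apply, ContinuousLinearMap.one_apply,
      Subalgebra.coe_one]
    by_cases hy : y = 0
    · simp [hy]
    obtain ⟨d, hd⟩ := eig y hy
    rw [hd]
    by_cases hind : ∃ a : 𝕜, y = a • x₀
    · obtain ⟨a, rfl⟩ := hind
      have ha : a ≠ 0 := by rintro rfl; simp at hy
      have := (A : X →L[𝕜] X).map_smul a x₀
      rw [hc, hd] at this
      -- this : d • a • x₀ = a • c • x₀
      have h3 : (d * a) • x₀ = (a * c) • x₀ := by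
        rw [mul_smul, mul_smul]; exact this
      have : d * a = a * c := by
        by_contra hne
        exact hx₀ (by
          have := sub_eq_zero.mpr h3
          rw [← sub_smul] at this
          exact (smul_eq_zero.mp this).resolve_left (sub_ne_zero.mpr hne))
      have hdc : d = c := by
        rw [mul_comm a c] at this
        exact mul_right_cancel₀ ha this
      rw [hdc]
    · push_neg at hind
      have hsumne : x₀ + y ≠ 0 := by
        intro hsum
        refine hind (-1) ?_
        rw [neg_smul, one_smul]
        exact (neg_eq_of_add_eq_zero_right hsum).symm
      obtain ⟨e, he⟩ := eig (x₀ + y) hsumne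
      rw [map_add, hc, hd] at he
      -- c • x₀ + d • y = e • (x₀ + y)
      rw [smul_add] at he
      have h4 : (c - e) • x₀ = (e - d) • y := by
        linear_combination (norm := module) he
      have hce : c = e := by
        by_contra hne
        have hx0eq : x₀ = ((c - e)⁻¹ * (e - d)) • y := by
          rw [mul_smul, ← h4, inv_smul_smul₀ (sub_ne_zero.mpr hne)]
        have hb : (c - e)⁻¹ * (e - d) ≠ 0 := by
          intro hb0
          rw [hb0, zero_smul] at hx0eq
          exact hx₀ hx0eq
        exact hind ((c - e)⁻¹ * (e - d))⁻¹ (by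
          rw [hx0eq, inv_smul_smul₀ hb])
      have hed : e = d := by
        by_contra hne
        rw [hce, sub_self, zero_smul] at h4
        exact hy ((smul_eq_zero.mp h4.symm).resolve_left (sub_ne_zero.mpr hne))
      rw [← hed, ← hce]
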